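/- Let f : Y → Z be a surjective homomorphism of finite nondegenerate involutive set-theoretic solutions of the Yang–Baxter equation. If Y is a multipermutation solution, then Z is a multipermutation solution. -/

import Mathlib

def r12 {X : Type} (r : X × X → X × X) : X × X × X → X × X × X :=
  fun q => ((r (q.1, q.2.1)).1, (r (q.1, q.2.1)).2, q.2.2)

def r23 {X : Type} (r : X × X → X × X) : X × X × X → X × X × X :=
  fun q => (q.1, r (q.2.1, q.2.2))

def IsSolution {X : Type} (r : X × X → X × X) : Prop :=
  Function.Bijective r ∧ (∀ p, r (r p) = p) ∧
  (∀ x, Function.Bijective fun y => (r (x, y)).1) ∧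
  (∀ y, Function.Bijective fun x => (r (x, y)).2) ∧
  ∀ p, r12 r (r23 r (r12 r p)) = r23 r (r12 r (r23 r p))

def IsMPSol : ℕ → (X : Type) → (X × X → X × X) → Prop
  | 0, X, _ => ∀ a b : X, a = b
  | m + 1, X, r => ∃ (Y : Type) (rY : Y × Y → Y × Y) (p : X → Y),
      Function.Surjective p ∧
      (∀ a b : X, (p a = p b ↔ (fun y => (r (a, y)).1) = fun y => (r (b, y)).1)) ∧
      (∀ q : X × X, rY (p q.1, p q.2) = (p (r q).1, p (r q).2)) ∧
      IsMPSol m Y rY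

namespace MPAux

variable {Z : Type} {r : Z × Z → Z × Z}

/-- left action map σ_a -/
def sig (r : Z × Z → Z × Z) (a : Z) : Z → Z := fun c => (r (a, c)).1

lemma ybe1 (h : IsSolution r) (x y z : Z) :
    sig r (r (x, y)).1 (sig r (r (x, y)).2 z) = sig r x (sig r y z) := by
  have := congrArg (fun q => q.1) (h.2.2.2.2 (x, y, z))
  simpa [r12, r23, sig] using this

lemma invol1 (h : IsSolution r) (a c : Z) :
    sig r (r (a, c)).1 (r (a, c)).2 = a := by
  have := congrArg Prod.fst (h.2.1 (a, c))
  simpa [sig] using this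

noncomputable def sigE (h : IsSolution r) (a : Z) : Z ≃ Z :=
  Equiv.ofBijective (fun y => (r (a, y)).1) (h.2.2.1 a)

lemma sigE_apply (h : IsSolution r) (a c : Z) : sigE h a c = sig r a c := rfl

lemma sigE_eq (h : IsSolution r) {a b : Z} (hab : sig r a = sig r b) :
    sigE h a = sigE h b := by
  apply Equiv.ext
  intro w
  exact congrFun hab w

lemma claimS (h : IsSolution r) (a z w : Z) :
    sig r z (sig r ((sigE h z).symm a) w) = sig r a (sig r ((sigE h a).symm z) w) := by
  set a₀ := (sigE h z).symm a with ha₀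
  have h1 : (r (z, a₀)).1 = a := (sigE h z).apply_symm_apply a
  have h2 : (r (z, a₀)).2 = (sigE h a).symm z := by
    rw [Equiv.eq_symm_apply]
    have := invol1 h z a₀
    rw [h1] at this
    exact this
  have h3 := ybe1 h z a₀ w
  rw [h1, h2] at h3
  exact h3.symm

lemma claimA (h : IsSolution r) {a b : Z} (hab : sig r a = sig r b) (z : Z) :
    sig r ((sigE h z).symm a) = sig r ((sigE h z).symm b) := by
  funext w
  have h1 := claimS h a z w
  have h2 := claimS h b z w
  have he : (sigE h a).symm = (sigE h b).symm := by rw [sigE_eq h hab]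
  rw [hab, he] at h1
  exact (h.2.2.1 z).1 (h1.trans h2.symm)

lemma iterA (h : IsSolution r) (z : Z) (k : ℕ) :
    ∀ a b : Z, sig r a = sig r b →
      sig r (((sigE h z)⁻¹ ^ k) a) = sig r (((sigE h z)⁻¹ ^ k) b) := by
  induction k with
  | zero => intro a b hab; simpa using hab
  | succ k ih =>
      intro a b hab
      have step : sig r ((sigE h z)⁻¹ a) = sig r ((sigE h z)⁻¹ b) := by
        have := claimA h hab z
        simpa [Equiv.Perm.inv_def] using this
      have := ih _ _ step
      simpa [pow_succ, Equiv.Perm.mul_apply] using this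

lemma claimB [Finite Z] (h : IsSolution r) {a b : Z} (hab : sig r a = sig r b) (z : Z) :
    sig r (sig r z a) = sig r (sig r z b) := by
  set g : Equiv.Perm Z := sigE h z with hg
  set n := orderOf g with hndef
  have hn : 0 < n := orderOf_pos g
  have hgn : g ^ n = 1 := pow_orderOf_eq_one g
  have hkey : g = g⁻¹ ^ (n - 1) := by
    have hn' : (n - 1) + 1 = n := Nat.succ_pred_eq_of_pos hn
    rw [inv_pow, eq_inv_iff_mul_eq_one, ← pow_succ', hn', hgn]
  have h1 : sig r (g a) = sig r (g b) := by
    rw [hkey]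
    exact iterA h z (n - 1) a b hab
  simpa [hg, sigE_apply] using h1

lemma wd1 [Finite Z] (h : IsSolution r) {a b c d : Z}
    (hab : sig r a = sig r b) (hcd : sig r c = sig r d) :
    sig r (r (a, c)).1 = sig r (r (b, d)).1 := by
  have h1 : (r (a, c)).1 = sig r a c := rfl
  have h2 : (r (b, d)).1 = sig r a d := by
    show (r (b, d)).1 = sig r a d
    rw [hab]; rfl
  rw [h1, h2]
  exact claimB h hcd a

lemma wd2 [Finite Z] (h : IsSolution r) {a b c d : Z}
    (hab : sig r a = sig r b) (hcd : sig r c = sig r d) :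
    sig r (r (a, c)).2 = sig r (r (b, d)).2 := by
  have hu := wd1 h hab hcd
  have ht : (r (a, c)).2 = (sigE h (r (a, c)).1).symm a := by
    rw [Equiv.eq_symm_apply]; exact invol1 h a c
  have ht' : (r (b, d)).2 = (sigE h (r (a, c)).1).symm b := by
    rw [sigE_eq h hu, Equiv.eq_symm_apply]; exact invol1 h b d
  rw [ht, ht']
  exact claimA h hab _

/-- the retract setoid: a ∼ b iff σ_a = σ_b -/
def retS (r : Z × Z → Z × Z) : Setoid Z :=
  ⟨fun a b => sig r a = sig r b, ⟨fun _ => rfl, Eq.symm, Eq.trans⟩⟩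

lemma retr_aux [Finite Z] (h : IsSolution r) :
    ∀ (a c b d : Z), retS r a b → retS r c d →
      ((Quotient.mk (retS r) (r (a, c)).1, Quotient.mk (retS r) (r (a, c)).2)
        = (Quotient.mk (retS r) (r (b, d)).1, Quotient.mk (retS r) (r (b, d)).2)) := by
  intro a c b d hab hcd
  exact Prod.ext (Quotient.sound (wd1 h hab hcd)) (Quotient.sound (wd2 h hab hcd))

/-- the retracted solution map on the quotient -/
def retr [Finite Z] (h : IsSolution r) :
    Quotient (retS r) × Quotient (retS r) → Quotient (retS r) × Quotient (retS r) :=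
  fun p => Quotient.lift₂ (s₁ := retS r) (s₂ := retS r)
    (fun a c => (Quotient.mk (retS r) (r (a, c)).1, Quotient.mk (retS r) (r (a, c)).2))
    (retr_aux h) p.1 p.2

lemma retr_mk [Finite Z] (h : IsSolution r) (a c : Z) :
    retr h (Quotient.mk (retS r) a, Quotient.mk (retS r) c)
      = (Quotient.mk (retS r) (r (a, c)).1, Quotient.mk (retS r) (r (a, c)).2) := rfl

lemma push {Z' : Type} [Finite Z'] (h : IsSolution r) (r' : Z' × Z' → Z' × Z')
    (g : Z → Z') (hg : Function.Surjective g)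
    (hh : ∀ q : Z × Z, r' (g q.1, g q.2) = (g (r q).1, g (r q).2)) :
    IsSolution r' := by
  have hgp : ∀ p : Z' × Z', ∃ q : Z × Z, (g q.1, g q.2) = p := by
    rintro ⟨x, y⟩
    obtain ⟨a, ha⟩ := hg x; obtain ⟨b, hb⟩ := hg y
    exact ⟨(a, b), by simp [ha, hb]⟩
  have hsurj : Function.Surjective r' := by
    rintro p
    obtain ⟨q, hq⟩ := hgp p
    obtain ⟨q₀, hq₀⟩ := h.1.2 q
    refine ⟨(g q₀.1, g q₀.2), ?_⟩
    rw [hh q₀, hq₀]; exact hq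
  refine ⟨Finite.surjective_iff_bijective.mp hsurj, ?_, ?_, ?_, ?_⟩
  · rintro p
    obtain ⟨⟨a, b⟩, hq⟩ := hgp p
    rw [← hq, hh (a, b)]
    have := hh (r (a, b))
    rw [this, h.2.1 (a, b)]
  · intro x'
    obtain ⟨x, hx⟩ := hg x'
    have hs : Function.Surjective fun y' => (r' (x', y')).1 := by
      intro z'
      obtain ⟨z, hz⟩ := hg z'
      obtain ⟨y, hy⟩ := (h.2.2.1 x).2 z
      refine ⟨g y, ?_⟩
      simp only [← hx, hh (x, y)]
      rw [← hz, ← hy]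
    exact Finite.surjective_iff_bijective.mp hs
  · intro y'
    obtain ⟨y, hy⟩ := hg y'
    have hs : Function.Surjective fun x' => (r' (x', y')).2 := by
      intro z'
      obtain ⟨z, hz⟩ := hg z'
      obtain ⟨x, hx⟩ := (h.2.2.2.1 y).2 z
      refine ⟨g x, ?_⟩
      simp only [← hy, hh (x, y)]
      rw [← hz, ← hx]
    exact Finite.surjective_iff_bijective.mp hs
  · have c12 : ∀ p : Z × Z × Z,
        r12 r' (g p.1, g p.2.1, g p.2.2) = (g (r12 r p).1, g (r12 r p).2.1, g (r12 r p).2.2) := by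
      intro p
      simp only [r12, hh (p.1, p.2.1)]
    have c23 : ∀ p : Z × Z × Z,
        r23 r' (g p.1, g p.2.1, g p.2.2) = (g (r23 r p).1, g (r23 r p).2.1, g (r23 r p).2.2) := by
      intro p
      simp only [r23, hh (p.2.1, p.2.2)]
    rintro ⟨x', y', z'⟩
    obtain ⟨x, hx⟩ := hg x'; obtain ⟨y, hy⟩ := hg y'; obtain ⟨z, hz⟩ := hg z'
    have key : ∀ p : Z × Z × Z,
        r12 r' (r23 r' (r12 r' (g p.1, g p.2.1, g p.2.2)))
          = r23 r' (r12 r' (r23 r' (g p.1, g p.2.1, g p.2.2))) := by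
      intro p
      rw [c12, c23, c12, c23, c12, c23, h.2.2.2.2 p]
    have := key (x, y, z)
    simpa [hx, hy, hz] using this

lemma mainLemma (m : ℕ) : ∀ {Y Z : Type} [Finite Z] (rY : Y × Y → Y × Y)
    (rZ : Z × Z → Z × Z), IsSolution rZ → ∀ f : Y → Z, Function.Surjective f →
    (∀ q : Y × Y, rZ (f q.1, f q.2) = (f (rY q).1, f (rY q).2)) →
    IsMPSol m Y rY → IsMPSol m Z rZ := by
  induction m with
  | zero =>
      intro Y Z _ rY rZ hZ f hf hhom hm a b
      obtain ⟨a', rfl⟩ := hf a; obtain ⟨b', rfl⟩ := hf b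
      rw [hm a' b']
  | succ m ih =>
      intro Y Z _ rY rZ hZ f hf hhom hm
      obtain ⟨Y', rY', pY, hps, hpiff, hphom, hY'⟩ := hm
      have hsig : ∀ y₁ y₂ : Y, ((fun x => (rY (y₁, x)).1) = fun x => (rY (y₂, x)).1) →
          sig rZ (f y₁) = sig rZ (f y₂) := by
        intro y₁ y₂ hsy
        funext z
        obtain ⟨x, rfl⟩ := hf z
        have h1 := congrArg Prod.fst (hhom (y₁, x))
        have h2 := congrArg Prod.fst (hhom (y₂, x))
        simp only [sig]
        rw [h1, h2]
        exact congrArg f (congrFun hsy x)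
      haveI : Finite (Quotient (retS rZ)) := Quotient.finite (retS rZ)
      set g : Z → Quotient (retS rZ) := Quotient.mk (retS rZ) with hgdef
      have hgs : Function.Surjective g := fun q => Quotient.exists_rep q
      set rZ' := retr hZ with hrZ'def
      have hgh : ∀ q : Z × Z, rZ' (g q.1, g q.2) = (g (rZ q).1, g (rZ q).2) := by
        rintro ⟨a, c⟩; exact retr_mk hZ a c
      have hZ'sol : IsSolution rZ' := push hZ rZ' g hgs hgh
      set f' : Y' → Quotient (retS rZ) := fun u => g (f (Function.surjInv hps u))
        with hf'def
      have hf'p : ∀ y : Y, f' (pY y) = g (f y) := by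
        intro y
        apply Quotient.sound
        apply hsig
        exact (hpiff _ y).mp (Function.surjInv_eq hps (pY y))
      have hf's : Function.Surjective f' := by
        intro z'
        obtain ⟨z, rfl⟩ := hgs z'
        obtain ⟨y, rfl⟩ := hf z
        exact ⟨pY y, hf'p y⟩
      have hf'hom : ∀ q : Y' × Y', rZ' (f' q.1, f' q.2) = (f' (rY' q).1, f' (rY' q).2) := by
        rintro ⟨u, v⟩
        obtain ⟨y₁, rfl⟩ := hps u; obtain ⟨y₂, rfl⟩ := hps v
        have h1 := hphom (y₁, y₂)
        simp only at h1
        rw [hf'p, hf'p, hgh (f y₁, f y₂), hhom (y₁, y₂)]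
        simp only [h1]
        rw [hf'p, hf'p]
      have hZ' : IsMPSol m (Quotient (retS rZ)) rZ' :=
        ih rY' rZ' hZ'sol f' hf's hf'hom hY'
      refine ⟨Quotient (retS rZ), rZ', g, hgs, ?_, hgh, hZ'⟩
      intro a b
      exact ⟨fun hab => Quotient.exact hab, fun hab => Quotient.sound hab⟩

end MPAux

theorem stmt17 {Y Z : Type} [Fintype Y] [Fintype Z]
    (rY : Y × Y → Y × Y) (rZ : Z × Z → Z × Z)
    (hY : IsSolution rY) (hZ : IsSolution rZ)
    (f : Y → Z) (hf : Function.Surjective f)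
    (hhom : ∀ q : Y × Y, rZ (f q.1, f q.2) = (f (rY q).1, f (rY q).2))
    (hmp : ∃ m, IsMPSol m Y rY) : ∃ m, IsMPSol m Z rZ := by
  obtain ⟨m, hm⟩ := hmp
  exact ⟨m, MPAux.mainLemma m rY rZ hZ f hf hhom hm⟩
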